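/- Let x_1, x_2 ∈ ℝ^d with x_1 ≠ x_2, and let ν = Σ_{α=1}^p ρ_α (l^α)_# λ_{[0,1]} be a polyline measure with l^α(t) = (1−t)P_α + t P_{α+1} and ρ_α ≥ 0, satisfying ⟨P_{α+1} − P_α, x_1 − x_2⟩ ≠ 0 for every α. Fix φ = (φ_1, φ_2) ∈ ℝ², and for each α let t_α be the unique solution of ‖l^α(t) − x_1‖² − φ_1 = ‖l^α(t) − x_2‖² − φ_2; assume t_α ∉ {0, 1} for every α with ρ_α > 0. Then the function ε ↦ ν(Lag_1((φ_1 + ε, φ_2))) is differentiable at ε = 0 with derivative Σ_{α : ρ_α > 0, t_α ∈ (0,1)} ρ_α / (2 |⟨P_{α+1} − P_α, x_1 − x_2⟩|). -/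

import Mathlib

open scoped RealInnerProductSpace
open MeasureTheory Filter
open scoped Topology


lemma measure_clamp_deriv (c t₀ : ℝ) (hc : c ≠ 0) (ht0 : t₀ ≠ 0) (ht1 : t₀ ≠ 1) :
    HasDerivAt (fun ε : ℝ => (volume (Set.Icc (0:ℝ) 1 ∩ {x | c * (x - t₀) ≤ ε})).toReal)
      (if 0 < t₀ ∧ t₀ < 1 then 1 / |c| else 0) 0 := by
  have hten : Tendsto (fun ε : ℝ => t₀ + ε / c) (𝓝 0) (𝓝 t₀) := by
    have h : Continuous (fun ε : ℝ => t₀ + ε / c) := by continuity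
    simpa using h.tendsto 0
  have hIic : ∀ u : ℝ, Set.Icc (0:ℝ) 1 ∩ Set.Iic u = Set.Icc 0 (min 1 u) := by
    intro u; ext x; simp only [Set.mem_inter_iff, Set.mem_Icc, Set.mem_Iic, le_min_iff]; tauto
  have hIci : ∀ u : ℝ, Set.Icc (0:ℝ) 1 ∩ Set.Ici u = Set.Icc (max 0 u) 1 := by
    intro u; ext x; simp only [Set.mem_inter_iff, Set.mem_Icc, Set.mem_Ici, max_le_iff]; tauto
  rcases hc.lt_or_gt with hcneg | hcpos
  · -- c < 0 : the set is Ici (t₀ + ε / c)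
    have hset : ∀ ε : ℝ, {x : ℝ | c * (x - t₀) ≤ ε} = Set.Ici (t₀ + ε / c) := by
      intro ε; ext x
      simp only [Set.mem_setOf_eq, Set.mem_Ici]
      rw [mul_comm, ← div_le_iff_of_neg hcneg]
      constructor <;> intro h <;> linarith
    rcases lt_trichotomy t₀ 0 with h0 | h0 | h0
    · -- g eventually 1
      have hev : ∀ᶠ ε in 𝓝 (0:ℝ),
          (volume (Set.Icc (0:ℝ) 1 ∩ {x | c * (x - t₀) ≤ ε})).toReal = 1 := by
        filter_upwards [hten.eventually_lt_const h0] with ε hε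
        rw [hset, hIci, max_eq_left hε.le, Real.volume_Icc]
        norm_num
      have : HasDerivAt (fun _ : ℝ => (1:ℝ)) 0 0 := hasDerivAt_const 0 1
      rw [if_neg (by rintro ⟨h1, -⟩; linarith)]
      exact this.congr_of_eventuallyEq hev
    · exact absurd h0 ht0
    · rcases lt_trichotomy t₀ 1 with h1 | h1 | h1
      · -- inside: g(ε) = 1 - (t₀ + ε/c)
        have hev : ∀ᶠ ε in 𝓝 (0:ℝ),
            (volume (Set.Icc (0:ℝ) 1 ∩ {x | c * (x - t₀) ≤ ε})).toReal
              = 1 - (t₀ + ε / c) := by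
          filter_upwards [hten.eventually_lt_const h1, hten.eventually_const_lt h0] with ε hεa hεb
          rw [hset, hIci, max_eq_right hεb.le, Real.volume_Icc,
            ENNReal.toReal_ofReal (by linarith)]
        have hd : HasDerivAt (fun ε : ℝ => 1 - (t₀ + ε / c)) (-(1 / c)) 0 := by
          simpa using (((hasDerivAt_id (0:ℝ)).div_const c).const_add t₀).const_sub 1
        rw [if_pos ⟨h0, h1⟩, abs_of_neg hcneg]
        have : (1 : ℝ) / -c = -(1 / c) := by field_simp
        rw [this]
        exact hd.congr_of_eventuallyEq hev
      · exact absurd h1 ht1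
      · -- t₀ > 1: g eventually 0
        have hev : ∀ᶠ ε in 𝓝 (0:ℝ),
            (volume (Set.Icc (0:ℝ) 1 ∩ {x | c * (x - t₀) ≤ ε})).toReal = 0 := by
          filter_upwards [hten.eventually_const_lt h1] with ε hε
          rw [hset, hIci, Set.Icc_eq_empty (not_le.2 (lt_max_iff.2 (Or.inr hε)))]
          simp
        rw [if_neg (by rintro ⟨-, h2⟩; linarith)]
        exact (hasDerivAt_const (0:ℝ) (0:ℝ)).congr_of_eventuallyEq hev
  · -- c > 0 : the set is Iic (t₀ + ε / c)
    have hset : ∀ ε : ℝ, {x : ℝ | c * (x - t₀) ≤ ε} = Set.Iic (t₀ + ε / c) := by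
      intro ε; ext x
      simp only [Set.mem_setOf_eq, Set.mem_Iic]
      rw [mul_comm, ← le_div_iff₀ hcpos]
      constructor <;> intro h <;> linarith
    rcases lt_trichotomy t₀ 0 with h0 | h0 | h0
    · -- g eventually 0
      have hev : ∀ᶠ ε in 𝓝 (0:ℝ),
          (volume (Set.Icc (0:ℝ) 1 ∩ {x | c * (x - t₀) ≤ ε})).toReal = 0 := by
        filter_upwards [hten.eventually_lt_const h0] with ε hε
        rw [hset, hIic, Set.Icc_eq_empty (not_le.2 (min_lt_iff.2 (Or.inr hε)))]
        simp
      rw [if_neg (by rintro ⟨h1, -⟩; linarith)]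
      exact (hasDerivAt_const (0:ℝ) (0:ℝ)).congr_of_eventuallyEq hev
    · exact absurd h0 ht0
    · rcases lt_trichotomy t₀ 1 with h1 | h1 | h1
      · have hev : ∀ᶠ ε in 𝓝 (0:ℝ),
            (volume (Set.Icc (0:ℝ) 1 ∩ {x | c * (x - t₀) ≤ ε})).toReal
              = t₀ + ε / c := by
          filter_upwards [hten.eventually_lt_const h1, hten.eventually_const_lt h0] with ε hεa hεb
          rw [hset, hIic, min_eq_right hεa.le, Real.volume_Icc,
            ENNReal.toReal_ofReal (by linarith)]
          ring
        have hd : HasDerivAt (fun ε : ℝ => t₀ + ε / c) (1 / c) 0 :=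
          ((hasDerivAt_id (0:ℝ)).div_const c).const_add t₀
        rw [if_pos ⟨h0, h1⟩, abs_of_pos hcpos]
        exact hd.congr_of_eventuallyEq hev
      · exact absurd h1 ht1
      · have hev : ∀ᶠ ε in 𝓝 (0:ℝ),
            (volume (Set.Icc (0:ℝ) 1 ∩ {x | c * (x - t₀) ≤ ε})).toReal = 1 := by
          filter_upwards [hten.eventually_const_lt h1] with ε hε
          rw [hset, hIic, min_eq_left hε.le, Real.volume_Icc]
          norm_num
        rw [if_neg (by rintro ⟨-, h2⟩; linarith)]
        exact (hasDerivAt_const (0:ℝ) (1:ℝ)).congr_of_eventuallyEq hev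

lemma diff_ident {d : ℕ} (x1 x2 y z : EuclideanSpace ℝ (Fin d)) :
    (‖y - x1‖^2 - ‖y - x2‖^2) - (‖z - x1‖^2 - ‖z - x2‖^2) = 2 * ⟪y - z, x2 - x1⟫ := by
  simp only [@norm_sub_sq_real, inner_sub_left, inner_sub_right]
  ring

/-- The polyline measure `ν = Σ_α ρ_α (l^α)_# λ_{[0,1]}`. -/
noncomputable def polylineMeasure {d p : ℕ} (P : Fin (p + 1) → EuclideanSpace ℝ (Fin d))
    (ρ : Fin p → ℝ) : Measure (EuclideanSpace ℝ (Fin d)) :=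
  ∑ α : Fin p, ENNReal.ofReal (ρ α) •
    Measure.map (fun t : ℝ => (1 - t) • P α.castSucc + t • P α.succ)
      (volume.restrict (Set.Icc (0 : ℝ) 1))

theorem derivative_of_cell_mass_in_weight {d p : ℕ}
    (x1 x2 : EuclideanSpace ℝ (Fin d)) (h12 : x1 ≠ x2)
    (P : Fin (p + 1) → EuclideanSpace ℝ (Fin d)) (ρ : Fin p → ℝ)
    (hρ : ∀ α, 0 ≤ ρ α)
    (hH : ∀ α : Fin p, ⟪P α.succ - P α.castSucc, x1 - x2⟫ ≠ 0)
    (φ1 φ2 : ℝ) (t : Fin p → ℝ)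
    (ht : ∀ α : Fin p,
      ‖((1 - t α) • P α.castSucc + t α • P α.succ) - x1‖ ^ 2 - φ1 =
        ‖((1 - t α) • P α.castSucc + t α • P α.succ) - x2‖ ^ 2 - φ2)
    (ht01 : ∀ α : Fin p, 0 < ρ α → t α ≠ 0 ∧ t α ≠ 1) :
    HasDerivAt
      (fun ε : ℝ =>
        (polylineMeasure P ρ {y | ‖y - x1‖ ^ 2 - (φ1 + ε) ≤ ‖y - x2‖ ^ 2 - φ2}).toReal)
      (∑ α ∈ Finset.univ.filter (fun α : Fin p => 0 < ρ α ∧ 0 < t α ∧ t α < 1),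
        ρ α / (2 * |⟪P α.succ - P α.castSucc, x1 - x2⟫|))
      0 := by
  classical
  set c : Fin p → ℝ := fun α => 2 * ⟪P α.succ - P α.castSucc, x2 - x1⟫ with hc_def
  have hc_ne : ∀ α, c α ≠ 0 := by
    intro α
    have : ⟪P α.succ - P α.castSucc, x2 - x1⟫ = -⟪P α.succ - P α.castSucc, x1 - x2⟫ := by
      rw [show x2 - x1 = -(x1 - x2) by abel, inner_neg_right]
    simp only [hc_def, this]
    intro h
    apply hH α
    have := mul_eq_zero.1 h
    rcases this with h | h
    · norm_num at h
    · linarith [h]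
  -- preimage identity
  have hpre : ∀ (α : Fin p) (ε : ℝ),
      (fun u : ℝ => (1 - u) • P α.castSucc + u • P α.succ) ⁻¹'
        {y | ‖y - x1‖ ^ 2 - (φ1 + ε) ≤ ‖y - x2‖ ^ 2 - φ2}
        = {u : ℝ | c α * (u - t α) ≤ ε} := by
    intro α ε
    ext u
    simp only [Set.mem_preimage, Set.mem_setOf_eq]
    set y := (1 - u) • P α.castSucc + u • P α.succ with hy
    set z := (1 - t α) • P α.castSucc + t α • P α.succ with hz
    have hyz : y - z = (u - t α) • (P α.succ - P α.castSucc) := by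
      rw [hy, hz]
      module
    have hkey : (‖y - x1‖^2 - ‖y - x2‖^2) - (‖z - x1‖^2 - ‖z - x2‖^2)
        = c α * (u - t α) := by
      rw [diff_ident, hyz, real_inner_smul_left, hc_def]
      ring
    have hz' : ‖z - x1‖^2 - ‖z - x2‖^2 = φ1 - φ2 := by
      have := ht α; rw [← hz] at this; linarith
    constructor <;> intro h <;> nlinarith [hkey, hz']
  -- measurability
  have hlmeas : ∀ α : Fin p,
      Measurable (fun u : ℝ => (1 - u) • P α.castSucc + u • P α.succ) := by
    intro α
    exact (((continuous_const.sub continuous_id).smul continuous_const).add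
      (continuous_id.smul continuous_const)).measurable
  have hSmeas : ∀ ε : ℝ, MeasurableSet
      {y : EuclideanSpace ℝ (Fin d) | ‖y - x1‖ ^ 2 - (φ1 + ε) ≤ ‖y - x2‖ ^ 2 - φ2} := by
    intro ε
    apply measurableSet_le
    · exact ((continuous_norm.comp (continuous_id.sub continuous_const)).pow 2 |>.sub
        continuous_const).measurable
    · exact ((continuous_norm.comp (continuous_id.sub continuous_const)).pow 2 |>.sub
        continuous_const).measurable
  -- mass formula
  have hmass : ∀ ε : ℝ,
      (polylineMeasure P ρ {y | ‖y - x1‖ ^ 2 - (φ1 + ε) ≤ ‖y - x2‖ ^ 2 - φ2}).toReal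
        = ∑ α : Fin p,
            ρ α * (volume (Set.Icc (0:ℝ) 1 ∩ {u : ℝ | c α * (u - t α) ≤ ε})).toReal := by
    intro ε
    rw [polylineMeasure]
    rw [Measure.finset_sum_apply]
    rw [ENNReal.toReal_sum]
    · apply Finset.sum_congr rfl
      intro α _
      rw [Measure.smul_apply, Measure.map_apply (hlmeas α) (hSmeas ε), hpre,
        Measure.restrict_apply (by
          have : MeasurableSet {u : ℝ | c α * (u - t α) ≤ ε} :=
            measurableSet_le (by fun_prop) measurable_const
          exact this), Set.inter_comm, smul_eq_mul, ENNReal.toReal_mul,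
        ENNReal.toReal_ofReal (hρ α)]
    · intro α _
      rw [Measure.smul_apply, smul_eq_mul]
      apply ENNReal.mul_ne_top ENNReal.ofReal_ne_top
      rw [Measure.map_apply (hlmeas α) (hSmeas ε),
        Measure.restrict_apply ((hSmeas ε).preimage (hlmeas α))]
      exact ((measure_mono Set.inter_subset_right).trans_lt
        (by rw [Real.volume_Icc]; norm_num)).ne
  -- derivative of each term
  have hterm : ∀ α : Fin p,
      HasDerivAt (fun ε : ℝ =>
          ρ α * (volume (Set.Icc (0:ℝ) 1 ∩ {u : ℝ | c α * (u - t α) ≤ ε})).toReal)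
        (if 0 < ρ α ∧ 0 < t α ∧ t α < 1 then
            ρ α / (2 * |⟪P α.succ - P α.castSucc, x1 - x2⟫|) else 0) 0 := by
    intro α
    rcases eq_or_lt_of_le (hρ α) with hρ0 | hρpos
    · rw [if_neg (by rintro ⟨h1, -⟩; exact absurd hρ0 (ne_of_lt h1))]
      have : (fun ε : ℝ =>
          ρ α * (volume (Set.Icc (0:ℝ) 1 ∩ {u : ℝ | c α * (u - t α) ≤ ε})).toReal)
          = fun _ => 0 := by
        funext ε; rw [← hρ0]; ring
      rw [this]
      exact hasDerivAt_const 0 0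
    · obtain ⟨h0, h1⟩ := ht01 α hρpos
      have := (measure_clamp_deriv (c α) (t α) (hc_ne α) h0 h1).const_mul (ρ α)
      refine (this.congr_deriv ?_)
      symm
      have habs : |c α| = 2 * |⟪P α.succ - P α.castSucc, x1 - x2⟫| := by
        have hcv : c α = -(2 * ⟪P α.succ - P α.castSucc, x1 - x2⟫) := by
          simp only [hc_def]
          rw [show x2 - x1 = -(x1 - x2) by abel, inner_neg_right]
          ring
        rw [hcv, abs_neg, abs_mul, abs_two]
      by_cases hin : 0 < t α ∧ t α < 1
      · rw [if_pos hin, if_pos ⟨hρpos, hin⟩, habs]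
        field_simp
      · rw [if_neg hin, if_neg (by rintro ⟨-, h⟩; exact hin h)]
        ring
  -- assemble
  have hsum : HasDerivAt (fun ε : ℝ => ∑ α : Fin p,
      ρ α * (volume (Set.Icc (0:ℝ) 1 ∩ {u : ℝ | c α * (u - t α) ≤ ε})).toReal)
      (∑ α : Fin p, if 0 < ρ α ∧ 0 < t α ∧ t α < 1 then
          ρ α / (2 * |⟪P α.succ - P α.castSucc, x1 - x2⟫|) else 0) 0 := by
    exact HasDerivAt.fun_sum (fun α _ => hterm α)
  rw [Finset.sum_filter]
  have hfun : (fun ε : ℝ =>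
      (polylineMeasure P ρ {y | ‖y - x1‖ ^ 2 - (φ1 + ε) ≤ ‖y - x2‖ ^ 2 - φ2}).toReal)
      = fun ε : ℝ => ∑ α : Fin p,
          ρ α * (volume (Set.Icc (0:ℝ) 1 ∩ {u : ℝ | c α * (u - t α) ≤ ε})).toReal := by
    funext ε; exact hmass ε
  rw [hfun]
  exact hsum
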